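/- Let (E,d) be a metric space, (Ω,F,P) a probability space, and X, Xₙ : Ω → E measurable such that the law of X is outer regular and X(Ω \ N) is Lindelöf (as a subspace of E) for some P-null set N. If lim P*(d(X,Xₙ) ≥ ε) = 0 for all ε > 0, then lim P(X ∈ O, Xₙ ∉ O) = 0 for every open O ⊆ E. -/

import Mathlib

open MeasureTheory Filter Topology
open scoped ENNReal

theorem stmt8 {Ω E : Type*} [MeasurableSpace Ω] [MetricSpace E]
    [MeasurableSpace E] [BorelSpace E]
    (P : Measure Ω) [IsProbabilityMeasure P]
    (X : Ω → E) (Xn : ℕ → Ω → E)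
    (hX : Measurable X) (hXn : ∀ n, Measurable (Xn n))
    (houter : ∀ A : Set E, MeasurableSet A → ∀ ε : ℝ≥0∞, 0 < ε →
      ∃ O : Set E, IsOpen O ∧ A ⊆ O ∧ P (X ⁻¹' (O \ A)) < ε)
    (hLindelof : ∃ N : Set Ω, P N = 0 ∧ IsLindelof (X '' Nᶜ))
    (h : ∀ ε : ℝ, 0 < ε →
      Tendsto (fun n => P {ω | ε ≤ dist (X ω) (Xn n ω)}) atTop (𝓝 0)) :
    ∀ O : Set E, IsOpen O →
      Tendsto (fun n => P (X ⁻¹' O ∩ Xn n ⁻¹' Oᶜ)) atTop (𝓝 0) := by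
  intro O hO
  by_cases hOc : Oᶜ = ∅
  · simp [hOc]
  -- the inner approximations
  set S : ℕ → Set Ω := fun k => X ⁻¹' {x | (1 : ℝ) / (k + 1) ≤ Metric.infDist x Oᶜ}
    with hS
  have hSmeas : ∀ k, MeasurableSet (S k) := by
    intro k
    exact hX (measurableSet_le measurable_const
      ((Metric.continuous_infDist_pt Oᶜ).measurable))
  have hSsub : ∀ k, S k ⊆ X ⁻¹' O := by
    intro k ω hω
    have h1 : (0 : ℝ) < 1 / (k + 1) := by positivity
    have h2 : 0 < Metric.infDist (X ω) Oᶜ := lt_of_lt_of_le h1 hω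
    by_contra hmem
    have : Metric.infDist (X ω) Oᶜ = 0 :=
      Metric.infDist_zero_of_mem (by simpa using hmem)
    linarith
  -- the difference sets tend to measure 0
  have hdiff : Tendsto (fun k => P (X ⁻¹' O \ S k)) atTop (𝓝 0) := by
    have hmono : Antitone (fun k => X ⁻¹' O \ S k) := by
      intro i j hij
      apply Set.diff_subset_diff_right
      intro ω hω
      simp only [hS, Set.mem_preimage, Set.mem_setOf_eq] at hω ⊢
      refine le_trans ?_ hω
      apply one_div_le_one_div_of_le (by positivity)
      have : (i:ℝ) ≤ j := by exact_mod_cast hij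
      linarith
    have hempty : ⋂ k, (X ⁻¹' O \ S k) = ∅ := by
      ext ω
      simp only [Set.mem_iInter, Set.mem_diff, Set.mem_empty_iff_false, iff_false]
      push_neg
      by_cases hω : X ω ∈ O
      · have hcl : IsClosed Oᶜ := hO.isClosed_compl
        have hpos : 0 < Metric.infDist (X ω) Oᶜ :=
          (hcl.notMem_iff_infDist_pos (Set.nonempty_iff_ne_empty.2 hOc)).1 (by simpa using hω)
        obtain ⟨k, hk⟩ := exists_nat_one_div_lt hpos
        refine ⟨k, fun _ => ?_⟩
        simp only [hS, Set.mem_preimage, Set.mem_setOf_eq]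
        exact_mod_cast hk.le
      · exact ⟨0, fun hmem => absurd hmem hω⟩
    have := tendsto_measure_iInter_atTop (μ := P)
      (fun k => ((hX hO.measurableSet).diff (hSmeas k)).nullMeasurableSet)
      hmono ⟨0, measure_ne_top _ _⟩
    rw [hempty] at this
    simpa [Function.comp_def] using this
  -- main estimate
  rw [ENNReal.tendsto_nhds_zero]
  intro ε hε
  have hε2 : 0 < ε / 2 := ENNReal.half_pos hε.ne'
  obtain ⟨k, hk⟩ : ∃ k, P (X ⁻¹' O \ S k) < ε / 2 := by
    have := (hdiff.eventually (gt_mem_nhds hε2)).exists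
    simpa using this
  have h1k : (0 : ℝ) < 1 / (k + 1) := by positivity
  have hh := (h (1 / (k + 1)) h1k).eventually (gt_mem_nhds hε2)
  filter_upwards [hh] with n hn
  have hsub : X ⁻¹' O ∩ Xn n ⁻¹' Oᶜ ⊆
      (X ⁻¹' O \ S k) ∪ {ω | (1:ℝ) / (k + 1) ≤ dist (X ω) (Xn n ω)} := by
    rintro ω ⟨hω1, hω2⟩
    by_cases hωS : ω ∈ S k
    · right
      have : Metric.infDist (X ω) Oᶜ ≤ dist (X ω) (Xn n ω) :=
        Metric.infDist_le_dist_of_mem hω2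
      exact le_trans hωS this
    · left; exact ⟨hω1, hωS⟩
  calc P (X ⁻¹' O ∩ Xn n ⁻¹' Oᶜ)
      ≤ P ((X ⁻¹' O \ S k) ∪ {ω | (1:ℝ) / (k + 1) ≤ dist (X ω) (Xn n ω)}) :=
        measure_mono hsub
    _ ≤ P (X ⁻¹' O \ S k) + P {ω | (1:ℝ) / (k + 1) ≤ dist (X ω) (Xn n ω)} :=
        measure_union_le _ _
    _ ≤ ε / 2 + ε / 2 := add_le_add hk.le hn.le
    _ = ε := ENNReal.add_halves ε
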